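/- For every a ∈ c₀(ℤ, K) there exist b ∈ c₀(ℤ, K) and a finitely supported sequence a′ : ℤ → K such that a_i = ((F−1)b)_i + a′_i for all i ∈ ℤ. Equivalently, the natural map from the uncompleted twisted Laurent polynomial module K[F^{±1}] (finitely supported sequences) to the cokernel of F − 1 : c₀(ℤ, K) → c₀(ℤ, K) is surjective. -/

import Mathlib

open Filter

/-- A two-sided sequence `b : ℤ → K` tends to `0` as `|i| → ∞`,
i.e. it lies in `c₀(ℤ, K)`. -/
def IsC0 {K : Type*} [NormedField K] (b : ℤ → K) : Prop :=
  Tendsto b cofinite (nhds 0)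

/-- Every `a ∈ c₀(ℤ, K)` can be written as `(F - 1) b + a'` with `b ∈ c₀(ℤ, K)` and
`a'` finitely supported: the natural map from the uncompleted twisted Laurent module
`K[F^{±1}]` to the cokernel of `F - 1` on `c₀(ℤ, K)` is surjective. -/
theorem exists_finsupp_repr_mod_FSubOne
    (p f q : ℕ) (hp : p.Prime) (hf : 1 ≤ f) (hq : q = p ^ f)
    (K : Type*) [NontriviallyNormedField K] [IsUltrametricDist K]
    [CompleteSpace K] [CharP K p]
    (a : ℤ → K) (ha : IsC0 a) :
    ∃ (b : ℤ → K) (a' : ℤ → K),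
      IsC0 b ∧ (Function.support a').Finite ∧
      ∀ i : ℤ, a i = ((b (i - 1)) ^ q - b i) + a' i := by
  haveI : ExpChar K p := .prime hp
  have hq2 : 2 ≤ q := by
    rw [hq]
    exact Nat.one_lt_pow (by omega) hp.one_lt
  -- the Frobenius `x ↦ x ^ q` as a ring homomorphism
  set φ : K →+* K := iterateFrobenius K p f with hφdef
  have hφx : ∀ x : K, φ x = x ^ q := fun x => by
    rw [hφdef, iterateFrobenius_def, hq]
  have hφc : Continuous φ := by
    have : (φ : K → K) = fun x => x ^ q := funext hφx
    rw [this]; exact continuous_pow q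
  -- truncate `a` to norms `≤ 1/2`
  set c : ℤ → K := fun j => if ‖a j‖ ≤ (1 / 2 : ℝ) then a j else 0 with hcdef
  have hca : ∀ j, ‖c j‖ ≤ ‖a j‖ := by
    intro j; rw [hcdef]; dsimp only
    split <;> simp [norm_nonneg]
  have hchalf : ∀ j, ‖c j‖ ≤ (1 / 2 : ℝ) := by
    intro j; rw [hcdef]; dsimp only
    split
    · assumption
    · simp
  -- the term bound: `‖c (i - n) ^ q ^ n‖ ≤ (1/2) ^ n`
  have hqn : ∀ n : ℕ, n ≤ q ^ n := fun n =>
    (Nat.lt_two_pow_self (n := n)).le.trans (Nat.pow_le_pow_left hq2 n)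
  have hterm : ∀ (i : ℤ) (n : ℕ), ‖c (i - n) ^ q ^ n‖ ≤ (1 / 2 : ℝ) ^ n := by
    intro i n
    rw [norm_pow]
    calc ‖c (i - n)‖ ^ q ^ n ≤ (1 / 2 : ℝ) ^ q ^ n :=
          pow_le_pow_left₀ (norm_nonneg _) (hchalf _) _
      _ ≤ (1 / 2 : ℝ) ^ n :=
          pow_le_pow_of_le_one (by norm_num) (by norm_num) (hqn n)
  have hsum : ∀ i : ℤ, Summable fun n : ℕ => c (i - n) ^ q ^ n := by
    intro i
    exact Summable.of_norm_bounded
      (summable_geometric_of_lt_one (by norm_num) (by norm_num)) (hterm i)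
  -- the candidate solution
  set S : ℤ → K := fun i => ∑' n : ℕ, c (i - n) ^ q ^ n with hSdef
  refine ⟨fun i => -S i, fun i => a i - c i, ?_, ?_, ?_⟩
  · -- `b` is c₀
    rw [IsC0, NormedAddCommGroup.tendsto_nhds_zero]
    intro δ hδ
    set δ' : ℝ := min (δ / 2) (1 / 2) with hδ'def
    have hδ'pos : 0 < δ' := lt_min (by linarith) (by norm_num)
    have hδ'le : δ' ≤ 1 / 2 := min_le_right _ _
    -- bound the tail of `a`
    have hev : ∀ᶠ j in cofinite, ‖a j‖ < δ' := by
      have := NormedAddCommGroup.tendsto_nhds_zero.mp ha δ' hδ'pos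
      exact this
    have hfin : {j : ℤ | ¬ ‖a j‖ < δ'}.Finite := by
      rwa [Filter.eventually_cofinite] at hev
    obtain ⟨M₀, hM₀⟩ := (hfin.image (fun j => |j|)).bddAbove
    set M : ℤ := max M₀ 0 + 1 with hMdef
    have hM : ∀ j : ℤ, M ≤ |j| → ‖a j‖ < δ' := by
      intro j hj
      by_contra h
      have : |j| ≤ M₀ := hM₀ ⟨j, h, rfl⟩
      omega
    obtain ⟨T, hT⟩ := exists_pow_lt_of_lt_one hδ'pos (show (1 / 2 : ℝ) < 1 by norm_num)
    -- the key estimate for `|i| ≥ M + T`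
    have hbound : ∀ i : ℤ, M + T ≤ |i| → ‖S i‖ ≤ δ' := by
      intro i hi
      refine IsUltrametricDist.norm_tsum_le_of_forall_le (f := fun n : ℕ => c (i - n) ^ q ^ n) ?_
      intro n
      rcases le_or_gt M |i - n| with h | h
      · -- far away: the coefficient is small
        have h1 : ‖c (i - n)‖ < δ' := lt_of_le_of_lt (hca _) (hM _ h)
        have h2 : ‖c (i - n)‖ ≤ 1 := (hchalf _).trans (by norm_num)
        calc ‖c (i - n) ^ q ^ n‖ = ‖c (i - n)‖ ^ q ^ n := norm_pow _ _
          _ ≤ ‖c (i - n)‖ := pow_le_of_le_one (norm_nonneg _) h2 (Nat.pos_of_ne_zero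
              (pow_ne_zero n (by omega))).ne'
          _ ≤ δ' := h1.le
      · -- near: the exponent is large, so `n ≥ T`
        have hTn : (T : ℤ) ≤ n := by
          rcases abs_cases i with ⟨hi1, _⟩ | ⟨hi1, _⟩
          · -- i ≥ 0, so i ≥ M + T, and |i - n| < M forces n > i - M ≥ T
            rcases abs_cases (i - (n : ℤ)) with ⟨_, _⟩ | ⟨_, _⟩ <;> omega
          · -- i < 0 : then i - n ≤ i ≤ -M, so |i - n| ≥ M, contradiction
            rcases abs_cases (i - (n : ℤ)) with ⟨_, _⟩ | ⟨_, _⟩ <;> omega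
        have hTn' : T ≤ n := by exact_mod_cast hTn
        calc ‖c (i - n) ^ q ^ n‖ ≤ (1 / 2 : ℝ) ^ n := hterm i n
          _ ≤ (1 / 2 : ℝ) ^ T := pow_le_pow_of_le_one (by norm_num) (by norm_num) hTn'
          _ ≤ δ' := hT.le
    -- conclude eventual smallness
    rw [Filter.eventually_cofinite]
    refine Set.Finite.subset (Set.finite_Ioo (-(M + T)) (M + T)) ?_
    intro i hi
    simp only [Set.mem_setOf_eq, not_lt] at hi
    by_contra hmem
    simp only [Set.mem_Ioo, not_and_or, not_lt] at hmem
    have habs : M + T ≤ |i| := by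
      rcases hmem with h | h <;> rcases abs_cases i with ⟨h1, _⟩ | ⟨h1, _⟩ <;> omega
    have : ‖-S i‖ ≤ δ' := by rw [norm_neg]; exact hbound i habs
    have : ‖-S i‖ < δ := lt_of_le_of_lt this (lt_of_le_of_lt (min_le_left _ _) (by linarith))
    linarith
  · -- `a'` has finite support
    have hev : ∀ᶠ j in cofinite, ‖a j‖ < 1 / 2 :=
      NormedAddCommGroup.tendsto_nhds_zero.mp ha (1 / 2) (by norm_num)
    have hfin : {j : ℤ | ¬ ‖a j‖ < 1 / 2}.Finite := by
      rwa [Filter.eventually_cofinite] at hev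
    refine hfin.subset ?_
    intro i hi
    simp only [Function.mem_support] at hi
    simp only [Set.mem_setOf_eq, not_lt]
    by_contra h
    push_neg at h
    have : c i = a i := by rw [hcdef]; dsimp only; rw [if_pos h.le]
    rw [this] at hi
    simp at hi
  · -- the functional equation
    intro i
    have key : (-S (i - 1)) ^ q - (-S i) = c i := by
      have hmap : φ (S (i - 1)) = ∑' n : ℕ, c (i - (n + 1 : ℕ)) ^ q ^ (n + 1) := by
        rw [hSdef]
        rw [(hsum (i - 1)).map_tsum φ hφc]
        congr 1
        funext n
        show φ (c (i - 1 - (n : ℤ)) ^ q ^ n) = _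
        rw [hφx, ← pow_mul, ← pow_succ]
        congr 2
        push_cast
        ring
      have hshift : S i = c i + ∑' n : ℕ, c (i - (n + 1 : ℕ)) ^ q ^ (n + 1) := by
        rw [hSdef]
        have := Summable.tsum_eq_zero_add (hsum i)
        simpa using this
      have hnegpow : (-S (i - 1)) ^ q = -(S (i - 1)) ^ q := by
        have := map_neg φ (S (i - 1))
        rw [hφx, hφx] at this
        exact this
      rw [hnegpow, ← hφx, hmap, hshift]
      ring
    rw [key]
    ring
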